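/- Let (A_n) be the stationary Gaussian AR(1) sequence with variance 1/2 and covariance Cov(A_0, A_n) = ρⁿ/2, and let (ν_t) be an independent Poisson process with intensity λ > 0. Define J(t) = A_{ν_t}. Then for every t, τ ≥ 0, E[J(t) J(t+τ)] = (1/2) e^{-λ(1-ρ)τ}. -/

import Mathlib

open MeasureTheory ProbabilityTheory Real

/-- For the Poisson-auto-regressive process `J(t) = A_{ν_t}`, where `(Aₙ)` is the
stationary Gaussian AR(1) sequence with `E[Aₙ A_{n+k}] = ρᵏ/2` and `(ν_t)` is an
independent Poisson process with intensity `l > 0`, one has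
`E[J(t) J(t+τ)] = (1/2) e^{-l(1-ρ)τ}`. -/
theorem par_covariance
    {Ω : Type*} [MeasureSpace Ω] [IsProbabilityMeasure (ℙ : Measure Ω)]
    (A : ℕ → Ω → ℝ) (hAmeas : ∀ n, Measurable (A n))
    (ν : ℝ → Ω → ℕ) (hνmeas : ∀ t, Measurable (ν t))
    (ρ l : ℝ) (hρ : |ρ| < 1) (hl : 0 < l)
    (t τ : ℝ) (ht : 0 ≤ t) (hτ : 0 ≤ τ)
    -- the AR(1) covariance structure
    (hAcov : ∀ n k : ℕ, ∫ ω, A n ω * A (n + k) ω ∂ℙ = ρ ^ k / 2)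
    -- the counting process is nondecreasing
    (hmono : ∀ ω, ν t ω ≤ ν (t + τ) ω)
    -- the pair (ν_t, increment) is independent of the whole sequence A
    (hindA : IndepFun (fun ω => (ν t ω, ν (t + τ) ω - ν t ω))
      (fun ω => fun n => A n ω) ℙ)
    -- independent increments
    (hindinc : IndepFun (ν t) (fun ω => ν (t + τ) ω - ν t ω) ℙ)
    -- Poisson marginals of the counting variable and of the increment
    (hpois : ∀ n : ℕ, ℙ {ω | ν t ω = n}
      = ENNReal.ofReal (Real.exp (-(l * t)) * (l * t) ^ n / n.factorial))
    (hpoisinc : ∀ k : ℕ, ℙ {ω | ν (t + τ) ω - ν t ω = k}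
      = ENNReal.ofReal (Real.exp (-(l * τ)) * (l * τ) ^ k / k.factorial)) :
    ∫ ω, A (ν t ω) ω * A (ν (t + τ) ω) ω ∂ℙ
      = (1 / 2) * Real.exp (-(l * (1 - ρ) * τ)) := by
  classical
  -- the atoms of the discrete pair (ν_t, increment)
  set s : ℕ × ℕ → Set Ω :=
    fun p => (fun ω => (ν t ω, ν (t + τ) ω - ν t ω)) ⁻¹' {p} with hs
  have hmem : ∀ (ω : Ω) (p : ℕ × ℕ),
      ω ∈ s p ↔ (ν t ω, ν (t + τ) ω - ν t ω) = p := by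
    intro ω p
    simp only [hs, Set.mem_preimage, Set.mem_singleton_iff]
  have hpairmeas : Measurable (fun ω => (ν t ω, ν (t + τ) ω - ν t ω)) :=
    (hνmeas t).prodMk ((hνmeas (t + τ)).sub (hνmeas t))
  have hsmeas : ∀ p, MeasurableSet (s p) := fun p =>
    hpairmeas (measurableSet_singleton p)
  -- variance and integrability facts
  have hvar : ∀ n, ∫ ω, A n ω * A n ω ∂ℙ = 1 / 2 := by
    intro n
    have := hAcov n 0
    simpa using this
  have hsq : ∀ n, Integrable (fun ω => A n ω * A n ω) ℙ := by
    intro n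
    by_contra h
    have h0 := hvar n
    rw [integral_undef h] at h0
    norm_num at h0
  have hInt : ∀ n m, Integrable (fun ω => A n ω * A m ω) ℙ := by
    intro n m
    refine Integrable.mono' (((hsq n).add (hsq m)).const_mul (1 / 2 : ℝ))
      (((hAmeas n).mul (hAmeas m)).aestronglyMeasurable)
      (Filter.Eventually.of_forall fun ω => ?_)
    rw [Real.norm_eq_abs, abs_mul]
    simp only [Pi.add_apply]
    nlinarith [sq_nonneg (|A n ω| - |A m ω|), abs_nonneg (A n ω), abs_nonneg (A m ω),
      sq_abs (A n ω), sq_abs (A m ω)]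
  have habs : ∀ n m, ∫ ω, |A n ω * A m ω| ∂ℙ ≤ 1 / 2 := by
    intro n m
    have h1 : ∫ ω, |A n ω * A m ω| ∂ℙ
        ≤ ∫ ω, (1 / 2 : ℝ) * (A n ω * A n ω + A m ω * A m ω) ∂ℙ := by
      refine integral_mono ((hInt n m).abs) (((hsq n).add (hsq m)).const_mul _)
        fun ω => ?_
      rw [abs_mul]
      nlinarith [sq_nonneg (|A n ω| - |A m ω|), abs_nonneg (A n ω), abs_nonneg (A m ω),
        sq_abs (A n ω), sq_abs (A m ω)]
    have h2 : ∫ ω, (1 / 2 : ℝ) * (A n ω * A n ω + A m ω * A m ω) ∂ℙ = 1 / 2 := by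
      rw [integral_const_mul, integral_add (hsq n) (hsq m), hvar n, hvar m]
      norm_num
    linarith
  -- independence workhorse: the integral over an atom factorizes
  have key : ∀ (p : ℕ × ℕ) (B : Ω → ℝ) (ψ : (ℕ → ℝ) → ℝ), Measurable ψ →
      B = (fun ω => ψ (fun n => A n ω)) → Integrable B ℙ →
      ∫ ω, (s p).indicator B ω ∂ℙ = (ℙ (s p)).toReal * ∫ ω, B ω ∂ℙ := by
    intro p B ψ hψ hB hBint
    have hφeq : (fun ω => if (ν t ω, ν (t + τ) ω - ν t ω) = p then (1 : ℝ) else 0)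
        = (s p).indicator (fun _ => (1 : ℝ)) := by
      funext ω
      by_cases h : (ν t ω, ν (t + τ) ω - ν t ω) = p
      · rw [if_pos h, Set.indicator_of_mem ((hmem ω p).2 h)]
      · rw [if_neg h, Set.indicator_of_notMem (fun hc => h ((hmem ω p).1 hc))]
    have hind : IndepFun
        (fun ω => if (ν t ω, ν (t + τ) ω - ν t ω) = p then (1 : ℝ) else 0) B ℙ := by
      rw [hB]
      exact hindA.comp
        (measurable_of_countable (fun q : ℕ × ℕ => if q = p then (1 : ℝ) else 0)) hψ
    have hφint : Integrable
        (fun ω => if (ν t ω, ν (t + τ) ω - ν t ω) = p then (1 : ℝ) else 0) ℙ := by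
      rw [hφeq]
      exact (integrable_const (1 : ℝ)).indicator (hsmeas p)
    have hmul : ∫ ω, (if (ν t ω, ν (t + τ) ω - ν t ω) = p then (1 : ℝ) else 0) * B ω ∂ℙ
        = (∫ ω, (if (ν t ω, ν (t + τ) ω - ν t ω) = p then (1 : ℝ) else 0) ∂ℙ)
          * ∫ ω, B ω ∂ℙ :=
      hind.integral_mul_eq_mul_integral hφint.1 hBint.1
    have e1 : ∫ ω, (s p).indicator B ω ∂ℙ
        = ∫ ω, (if (ν t ω, ν (t + τ) ω - ν t ω) = p then (1 : ℝ) else 0) * B ω ∂ℙ := by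
      refine integral_congr_ae (Filter.Eventually.of_forall fun ω => ?_)
      show (s p).indicator B ω
        = (if (ν t ω, ν (t + τ) ω - ν t ω) = p then (1 : ℝ) else 0) * B ω
      by_cases h : ω ∈ s p
      · rw [Set.indicator_of_mem h, if_pos ((hmem ω p).1 h), one_mul]
      · rw [Set.indicator_of_notMem h, if_neg (fun hc => h ((hmem ω p).2 hc)), zero_mul]
    have e2 : ∫ ω, (if (ν t ω, ν (t + τ) ω - ν t ω) = p then (1 : ℝ) else 0) ∂ℙ
        = (ℙ (s p)).toReal := by
      rw [hφeq, integral_indicator_const (1 : ℝ) (hsmeas p), smul_eq_mul, mul_one, measureReal_def]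
    rw [e1, hmul, e2]
  -- the summands
  set g : ℕ × ℕ → Ω → ℝ :=
    fun p => (s p).indicator (fun ω => A p.1 ω * A (p.1 + p.2) ω) with hg
  have hgmeas : ∀ p, AEStronglyMeasurable (g p) ℙ := fun p =>
    (((hAmeas p.1).mul (hAmeas (p.1 + p.2))).indicator (hsmeas p)).aestronglyMeasurable
  have hgint : ∀ p : ℕ × ℕ, Integrable (g p) ℙ := fun p =>
    (hInt p.1 (p.1 + p.2)).indicator (hsmeas p)
  have hgval : ∀ p : ℕ × ℕ, ∫ ω, g p ω ∂ℙ = (ℙ (s p)).toReal * (ρ ^ p.2 / 2) := by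
    intro p
    have h := key p (fun ω => A p.1 ω * A (p.1 + p.2) ω)
      (fun a => a p.1 * a (p.1 + p.2))
      ((measurable_pi_apply p.1).mul (measurable_pi_apply (p.1 + p.2)))
      rfl (hInt p.1 (p.1 + p.2))
    simp only [hg]
    rw [h, hAcov p.1 p.2]
  -- pointwise representation as a tsum
  have hADD : ∀ ω, ν t ω + (ν (t + τ) ω - ν t ω) = ν (t + τ) ω := fun ω =>
    Nat.add_sub_cancel' (hmono ω)
  have hrepr : (fun ω => A (ν t ω) ω * A (ν (t + τ) ω) ω)
      = fun ω => ∑' p : ℕ × ℕ, g p ω := by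
    funext ω
    rw [tsum_eq_single (ν t ω, ν (t + τ) ω - ν t ω) ?_]
    · have hωmem : ω ∈ s (ν t ω, ν (t + τ) ω - ν t ω) := (hmem ω _).2 rfl
      simp only [hg]
      rw [Set.indicator_of_mem hωmem]
      rw [hADD ω]
    · intro p hp
      simp only [hg]
      exact Set.indicator_of_notMem (fun hc => hp (((hmem ω p).1 hc).symm)) _
  -- the atoms partition Ω
  have hsums : ∑' p : ℕ × ℕ, ℙ (s p) = 1 := by
    have hdisj : Pairwise (Function.onFun Disjoint s) := by
      intro p q hpq
      rw [Function.onFun, Set.disjoint_left]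
      intro ω hωp hωq
      exact hpq (((hmem ω p).1 hωp).symm.trans ((hmem ω q).1 hωq))
    have hu : ⋃ p : ℕ × ℕ, s p = Set.univ := by
      ext ω
      simp only [Set.mem_iUnion, Set.mem_univ, iff_true]
      exact ⟨(ν t ω, ν (t + τ) ω - ν t ω), (hmem ω _).2 rfl⟩
    rw [← measure_iUnion hdisj hsmeas, hu, measure_univ]
  -- uniform L¹ bound on the summands
  have hnormval : ∀ p : ℕ × ℕ, ∫⁻ ω, ‖g p ω‖₊ ∂ℙ ≤ ℙ (s p) * ENNReal.ofReal (1 / 2) := by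
    intro p
    have h1 : ENNReal.ofReal (∫ ω, ‖g p ω‖ ∂ℙ) = ∫⁻ ω, ‖g p ω‖₊ ∂ℙ :=
      ofReal_integral_norm_eq_lintegral_enorm (hgint p)
    have h2 : ∫ ω, ‖g p ω‖ ∂ℙ
        = (ℙ (s p)).toReal * ∫ ω, |A p.1 ω * A (p.1 + p.2) ω| ∂ℙ := by
      have hk := key p (fun ω => |A p.1 ω * A (p.1 + p.2) ω|)
        (fun a => |a p.1 * a (p.1 + p.2)|)
        (((measurable_pi_apply p.1).mul (measurable_pi_apply (p.1 + p.2))).abs)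
        rfl ((hInt p.1 (p.1 + p.2)).abs)
      rw [← hk]
      refine integral_congr_ae (Filter.Eventually.of_forall fun ω => ?_)
      simp only [hg]
      rw [norm_indicator_eq_indicator_norm]
      rfl
    rw [← h1, h2]
    calc ENNReal.ofReal ((ℙ (s p)).toReal * ∫ ω, |A p.1 ω * A (p.1 + p.2) ω| ∂ℙ)
        ≤ ENNReal.ofReal ((ℙ (s p)).toReal * (1 / 2)) := by
          exact ENNReal.ofReal_le_ofReal
            (mul_le_mul_of_nonneg_left (habs _ _) ENNReal.toReal_nonneg)
      _ = ℙ (s p) * ENNReal.ofReal (1 / 2) := by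
          rw [ENNReal.ofReal_mul ENNReal.toReal_nonneg,
            ENNReal.ofReal_toReal (measure_ne_top _ _)]
  have hfin : ∑' p : ℕ × ℕ, ∫⁻ ω, ‖g p ω‖₊ ∂ℙ ≠ ⊤ := by
    refine ne_top_of_le_ne_top ?_ (ENNReal.tsum_le_tsum hnormval)
    rw [ENNReal.tsum_mul_right, hsums, one_mul]
    exact ENNReal.ofReal_ne_top
  -- measures of the atoms
  have hmeasprod : ∀ n k : ℕ, ℙ (s (n, k)) =
      ENNReal.ofReal (Real.exp (-(l * t)) * (l * t) ^ n / n.factorial)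
        * ENNReal.ofReal (Real.exp (-(l * τ)) * (l * τ) ^ k / k.factorial) := by
    intro n k
    have hseq : s (n, k)
        = ν t ⁻¹' {n} ∩ (fun ω => ν (t + τ) ω - ν t ω) ⁻¹' {k} := by
      ext ω
      simp [hs, Prod.ext_iff]
    rw [hseq, hindinc.measure_inter_preimage_eq_mul {n} {k}
      (measurableSet_singleton n) (measurableSet_singleton k)]
    congr 1
    · rw [show ν t ⁻¹' {n} = {ω | ν t ω = n} by ext ω; simp]
      exact hpois n
    · rw [show (fun ω => ν (t + τ) ω - ν t ω) ⁻¹' {k}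
          = {ω | ν (t + τ) ω - ν t ω = k} by ext ω; simp]
      exact hpoisinc k
  -- the two one-dimensional summands
  set u : ℕ → ℝ := fun n => Real.exp (-(l * t)) * ((l * t) ^ n / n.factorial) with hu
  set v : ℕ → ℝ := fun k =>
    (Real.exp (-(l * τ)) / 2) * ((l * τ * ρ) ^ k / k.factorial) with hv
  have hlt0 : (0 : ℝ) ≤ l * t := mul_nonneg hl.le ht
  have hlτ0 : (0 : ℝ) ≤ l * τ := mul_nonneg hl.le hτ
  have hterm : ∀ p : ℕ × ℕ, (ℙ (s p)).toReal * (ρ ^ p.2 / 2) = u p.1 * v p.2 := by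
    rintro ⟨n, k⟩
    have hn0 : (0 : ℝ) ≤ Real.exp (-(l * t)) * (l * t) ^ n / n.factorial :=
      div_nonneg (mul_nonneg (Real.exp_pos _).le (pow_nonneg hlt0 n)) (Nat.cast_nonneg _)
    have hk0 : (0 : ℝ) ≤ Real.exp (-(l * τ)) * (l * τ) ^ k / k.factorial :=
      div_nonneg (mul_nonneg (Real.exp_pos _).le (pow_nonneg hlτ0 k)) (Nat.cast_nonneg _)
    rw [hmeasprod n k, ENNReal.toReal_mul, ENNReal.toReal_ofReal hn0,
      ENNReal.toReal_ofReal hk0]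
    simp only [hu, hv]
    rw [mul_pow (l * τ) ρ k]
    ring
  -- summability of norms
  have hnorm : ∀ c x : ℝ, Summable (fun k : ℕ => ‖c * (x ^ k / k.factorial)‖) := by
    intro c x
    have he : (fun k : ℕ => ‖c * (x ^ k / k.factorial)‖)
        = fun k => |c| * (|x| ^ k / k.factorial) := by
      funext k
      rw [Real.norm_eq_abs, abs_mul, abs_div, abs_pow, Nat.abs_cast]
    rw [he]
    exact (Real.summable_pow_div_factorial |x|).mul_left _
  have hu_norm : Summable (fun n => ‖u n‖) := by
    simp only [hu]; exact hnorm _ _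
  have hv_norm : Summable (fun k => ‖v k‖) := by
    simp only [hv]; exact hnorm _ _
  -- exponential series
  have hexp : ∀ x : ℝ, ∑' n : ℕ, x ^ n / n.factorial = Real.exp x := by
    intro x
    rw [Real.exp_eq_exp_ℝ, NormedSpace.exp_eq_tsum_div]
  have hsum_u : ∑' n, u n = 1 := by
    simp only [hu]
    rw [tsum_mul_left, hexp, ← Real.exp_add]
    norm_num
  have hsum_v : ∑' k, v k = Real.exp (-(l * τ)) / 2 * Real.exp (l * τ * ρ) := by
    simp only [hv]
    rw [tsum_mul_left, hexp]
  -- putting it all together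
  calc ∫ ω, A (ν t ω) ω * A (ν (t + τ) ω) ω ∂ℙ
      = ∫ ω, ∑' p : ℕ × ℕ, g p ω ∂ℙ := by rw [hrepr]
    _ = ∑' p : ℕ × ℕ, ∫ ω, g p ω ∂ℙ := integral_tsum hgmeas hfin
    _ = ∑' p : ℕ × ℕ, u p.1 * v p.2 := tsum_congr fun p => by
        rw [hgval p, hterm p]
    _ = (∑' n, u n) * ∑' k, v k := (tsum_mul_tsum_of_summable_norm hu_norm hv_norm).symm
    _ = (1 / 2) * Real.exp (-(l * (1 - ρ) * τ)) := by
        rw [hsum_u, hsum_v, one_mul, div_mul_eq_mul_div, ← Real.exp_add,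
          show -(l * τ) + l * τ * ρ = -(l * (1 - ρ) * τ) by ring]
        ring
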